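/- Let p, q ≥ 2 be integers and μ ∈ ℂ ∖ {0}. If z₀ = (u₀, v₀) is a singular point of P(u,v;μ), then u₀ ≠ 0, v₀ ≠ 0, p·|u₀|^{p−1} = 1, q·|v₀|^{q−1} = 1, and there exists an integer κ such that ((p−1)/2)·arg u₀ + arg μ = ((q−1)/2)·arg v₀ + κπ. -/

import Mathlib

open Complex

private theorem key_alg (A B : ℂ) (h : ∀ w : ℂ, (A * w + B * (starRingEnd ℂ) w).re = 0) :
    A = -(starRingEnd ℂ) B := by
  have h2 : ∀ w : ℂ, ((A + (starRingEnd ℂ) B) * w).re = 0 := by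
    intro w
    have hw := h w
    have hre : (B * (starRingEnd ℂ) w).re = ((starRingEnd ℂ) B * w).re := by
      rw [← Complex.conj_re ((starRingEnd ℂ) B * w)]
      simp [mul_comm]
    rw [Complex.add_re, hre] at hw
    rw [add_mul, Complex.add_re]
    exact hw
  have h3 := h2 ((starRingEnd ℂ) (A + (starRingEnd ℂ) B))
  rw [Complex.mul_conj] at h3
  have h4 : A + (starRingEnd ℂ) B = 0 :=
    Complex.normSq_eq_zero.mp (by exact_mod_cast h3)
  linear_combination h4

theorem singular_point_characterization
    (p q : ℕ) (hp : 2 ≤ p) (hq : 2 ≤ q) (μ : ℂ) (hμ : μ ≠ 0) (u₀ v₀ : ℂ)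
    (hsing : ¬ Function.Surjective
      ⇑(fderiv ℝ (fun z : ℂ × ℂ =>
          μ * (z.1 ^ p + (starRingEnd ℂ) z.1) + z.2 ^ q + (starRingEnd ℂ) z.2) (u₀, v₀))) :
    u₀ ≠ 0 ∧ v₀ ≠ 0 ∧
      (p : ℝ) * ‖u₀‖ ^ (p - 1) = 1 ∧
      (q : ℝ) * ‖v₀‖ ^ (q - 1) = 1 ∧
      ∃ κ : ℤ, ((p : ℝ) - 1) / 2 * Complex.arg u₀ + Complex.arg μ
        = ((q : ℝ) - 1) / 2 * Complex.arg v₀ + κ * Real.pi := by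
  -- Step 1: compute the derivative
  obtain ⟨D, HD, hDu, hDv⟩ :
      ∃ D : ℂ × ℂ →L[ℝ] ℂ,
        HasFDerivAt (fun z : ℂ × ℂ =>
            μ * (z.1 ^ p + (starRingEnd ℂ) z.1) + z.2 ^ q + (starRingEnd ℂ) z.2) D (u₀, v₀) ∧
        (∀ w : ℂ, D (w, 0) = μ * ((p : ℂ) * u₀ ^ (p - 1) * w + (starRingEnd ℂ) w)) ∧
        (∀ w : ℂ, D (0, w) = (q : ℂ) * v₀ ^ (q - 1) * w + (starRingEnd ℂ) w) := by
    have hfst := hasFDerivAt_fst (𝕜 := ℝ) (p := ((u₀, v₀) : ℂ × ℂ))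
    have hsnd := hasFDerivAt_snd (𝕜 := ℝ) (p := ((u₀, v₀) : ℂ × ℂ))
    have hupow : HasFDerivAt (fun u : ℂ => u ^ p)
        (((1 : ℂ →L[ℂ] ℂ).smulRight ((p : ℂ) * u₀ ^ (p - 1))).restrictScalars ℝ) u₀ :=
      ((hasDerivAt_pow p u₀).hasFDerivAt).restrictScalars ℝ
    have hvpow : HasFDerivAt (fun v : ℂ => v ^ q)
        (((1 : ℂ →L[ℂ] ℂ).smulRight ((q : ℂ) * v₀ ^ (q - 1))).restrictScalars ℝ) v₀ :=
      ((hasDerivAt_pow q v₀).hasFDerivAt).restrictScalars ℝ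
    have hconj : ∀ x : ℂ, HasFDerivAt (fun z : ℂ => (starRingEnd ℂ) z)
        (Complex.conjCLE.toContinuousLinearMap) x := fun x =>
      Complex.conjCLE.toContinuousLinearMap.hasFDerivAt
    have h1 := (hupow.comp (u₀, v₀) hfst)
    have h2 := ((hconj u₀).comp (u₀, v₀) hfst)
    have h3 := (hvpow.comp (u₀, v₀) hsnd)
    have h4 := ((hconj v₀).comp (u₀, v₀) hsnd)
    have H := (((h1.add h2).const_mul μ).add h3).add h4
    refine ⟨_, H, ?_, ?_⟩ <;> intro w <;>
      · simp [ContinuousLinearMap.smul_apply, Complex.conjCLE_apply, mul_comm]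
        try ring
  rw [HD.fderiv] at hsing
  -- Step 2: a nonzero functional vanishing on the range
  have hlt : LinearMap.range (D : ℂ × ℂ →ₗ[ℝ] ℂ) < ⊤ := by
    rw [lt_top_iff_ne_top]
    intro htop
    exact hsing (LinearMap.range_eq_top.mp htop)
  obtain ⟨f, hf0, hfker⟩ :=
    Submodule.exists_dual_map_eq_bot_of_lt_top hlt inferInstance
  have hfD : ∀ z : ℂ × ℂ, f (D z) = 0 := by
    intro z
    have : f (D z) ∈ Submodule.map f (LinearMap.range (D : ℂ × ℂ →ₗ[ℝ] ℂ)) :=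
      Submodule.mem_map_of_mem (LinearMap.mem_range_self _ z)
    rw [hfker] at this
    simpa using this
  -- Step 3: represent f via a complex number c
  set c : ℂ := (f 1 : ℂ) - (f Complex.I : ℂ) * Complex.I with hc
  have hcre : ∀ w : ℂ, f w = (c * w).re := by
    intro w
    have hw : w = w.re • (1 : ℂ) + w.im • Complex.I := by
      simp only [Complex.real_smul, mul_one]
      exact (Complex.re_add_im w).symm
    rw [hw, map_add, map_smul, map_smul]
    simp [hc, Complex.mul_re]
    try ring
  have hcne : c ≠ 0 := by
    intro h0
    apply hf0
    ext w
    rw [hcre w, h0]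
    simp
  -- Step 4: the two equations
  have hu : (c * μ * ((p : ℂ) * u₀ ^ (p - 1))) = -(starRingEnd ℂ) (c * μ) := by
    apply key_alg
    intro w
    have := hfD (w, 0)
    rw [hDu w, hcre] at this
    rw [show c * μ * ((p:ℂ) * u₀ ^ (p-1)) * w + c * μ * (starRingEnd ℂ) w
        = c * (μ * ((p : ℂ) * u₀ ^ (p - 1) * w + (starRingEnd ℂ) w)) by ring]
    exact this
  have hv : (c * ((q : ℂ) * v₀ ^ (q - 1))) = -(starRingEnd ℂ) c := by
    apply key_alg
    intro w
    have := hfD (0, w)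
    rw [hDv w, hcre] at this
    rw [show c * ((q:ℂ) * v₀ ^ (q-1)) * w + c * (starRingEnd ℂ) w
        = c * ((q : ℂ) * v₀ ^ (q - 1) * w + (starRingEnd ℂ) w) by ring]
    exact this
  -- Step 5: modulus conditions
  have habsu : (p : ℝ) * ‖u₀‖ ^ (p - 1) = 1 := by
    have := congrArg (fun x : ℂ => ‖x‖) hu
    simp only [norm_mul, norm_neg, Complex.norm_conj, norm_pow, Complex.norm_natCast] at this
    have hcabs : ‖c‖ ≠ 0 := norm_ne_zero_iff.mpr hcne
    have hμabs : ‖μ‖ ≠ 0 := norm_ne_zero_iff.mpr hμ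
    field_simp at this
    linarith [this]
  have habsv : (q : ℝ) * ‖v₀‖ ^ (q - 1) = 1 := by
    have := congrArg (fun x : ℂ => ‖x‖) hv
    simp only [norm_mul, norm_neg, Complex.norm_conj, norm_pow, Complex.norm_natCast] at this
    have hcabs : ‖c‖ ≠ 0 := norm_ne_zero_iff.mpr hcne
    field_simp at this
    linarith [this]
  have hu0 : u₀ ≠ 0 := by
    intro h0
    rw [h0] at habsu
    simp [zero_pow (by omega : p - 1 ≠ 0)] at habsu
  have hv0 : v₀ ≠ 0 := by
    intro h0
    rw [h0] at habsv
    simp [zero_pow (by omega : q - 1 ≠ 0)] at habsv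
  refine ⟨hu0, hv0, habsu, habsv, ?_⟩
  -- Step 6: eliminate c
  have hstar : μ * ((p : ℂ) * u₀ ^ (p - 1))
      = (starRingEnd ℂ) μ * ((q : ℂ) * v₀ ^ (q - 1)) := by
    apply mul_left_cancel₀ hcne
    have hconjc : (starRingEnd ℂ) c = -(c * ((q : ℂ) * v₀ ^ (q - 1))) := by
      rw [hv]; ring
    calc c * (μ * ((p : ℂ) * u₀ ^ (p - 1)))
        = c * μ * ((p : ℂ) * u₀ ^ (p - 1)) := by ring
      _ = -(starRingEnd ℂ) (c * μ) := hu
      _ = -((starRingEnd ℂ) c * (starRingEnd ℂ) μ) := by rw [map_mul]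
      _ = (c * ((q : ℂ) * v₀ ^ (q - 1))) * (starRingEnd ℂ) μ := by rw [hconjc]; ring
      _ = c * ((starRingEnd ℂ) μ * ((q : ℂ) * v₀ ^ (q - 1))) := by ring
  -- Step 7: rewrite both sides in polar form
  have hcast1 : ((p - 1 : ℕ) : ℝ) = (p : ℝ) - 1 := by
    have : (1 : ℕ) ≤ p := by omega
    push_cast [Nat.cast_sub this]
    ring
  have hcast2 : ((q - 1 : ℕ) : ℝ) = (q : ℝ) - 1 := by
    have : (1 : ℕ) ≤ q := by omega
    push_cast [Nat.cast_sub this]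
    ring
  have hL : μ * ((p : ℂ) * u₀ ^ (p - 1)) = (‖μ‖ : ℂ) *
      Complex.exp ((Complex.arg μ + ((p : ℝ) - 1) * Complex.arg u₀) * Complex.I) := by
    conv_lhs => rw [← Complex.norm_mul_exp_arg_mul_I μ, ← Complex.norm_mul_exp_arg_mul_I u₀]
    rw [mul_pow, ← Complex.exp_nat_mul]
    have hone : ((p : ℂ) * (‖u₀‖ : ℂ) ^ (p - 1)) = 1 := by
      exact_mod_cast congrArg (fun x : ℝ => (x : ℂ)) habsu
    calc (‖μ‖ : ℂ) * Complex.exp (Complex.arg μ * Complex.I) *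
          ((p : ℂ) * ((‖u₀‖ : ℂ) ^ (p - 1) *
            Complex.exp (((p - 1 : ℕ) : ℂ) * (Complex.arg u₀ * Complex.I))))
        = (‖μ‖ : ℂ) * (((p : ℂ) * (‖u₀‖ : ℂ) ^ (p - 1)) *
            (Complex.exp (Complex.arg μ * Complex.I) *
             Complex.exp (((p - 1 : ℕ) : ℂ) * (Complex.arg u₀ * Complex.I)))) := by ring
      _ = (‖μ‖ : ℂ) *
          Complex.exp ((Complex.arg μ + ((p : ℝ) - 1) * Complex.arg u₀) * Complex.I) := by
            rw [hone, one_mul, ← Complex.exp_add]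
            congr 1
            push_cast [Nat.cast_sub (show 1 ≤ p by omega)]
            ring
  have hR : (starRingEnd ℂ) μ * ((q : ℂ) * v₀ ^ (q - 1)) = (‖μ‖ : ℂ) *
      Complex.exp ((-Complex.arg μ + ((q : ℝ) - 1) * Complex.arg v₀) * Complex.I) := by
    have hμconj : (starRingEnd ℂ) μ
        = (‖μ‖ : ℂ) * Complex.exp (-(Complex.arg μ : ℂ) * Complex.I) := by
      conv_lhs => rw [← Complex.norm_mul_exp_arg_mul_I μ]
      rw [map_mul, ← Complex.exp_conj]
      simp
      try ring_nf
    conv_lhs => rw [hμconj, ← Complex.norm_mul_exp_arg_mul_I v₀]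
    rw [mul_pow, ← Complex.exp_nat_mul]
    have hone : ((q : ℂ) * (‖v₀‖ : ℂ) ^ (q - 1)) = 1 := by
      exact_mod_cast congrArg (fun x : ℝ => (x : ℂ)) habsv
    calc (‖μ‖ : ℂ) * Complex.exp (-(Complex.arg μ : ℂ) * Complex.I) *
          ((q : ℂ) * ((‖v₀‖ : ℂ) ^ (q - 1) *
            Complex.exp (((q - 1 : ℕ) : ℂ) * (Complex.arg v₀ * Complex.I))))
        = (‖μ‖ : ℂ) * (((q : ℂ) * (‖v₀‖ : ℂ) ^ (q - 1)) *
            (Complex.exp (-(Complex.arg μ : ℂ) * Complex.I) *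
             Complex.exp (((q - 1 : ℕ) : ℂ) * (Complex.arg v₀ * Complex.I)))) := by ring
      _ = (‖μ‖ : ℂ) *
          Complex.exp ((-Complex.arg μ + ((q : ℝ) - 1) * Complex.arg v₀) * Complex.I) := by
            rw [hone, one_mul, ← Complex.exp_add]
            congr 1
            push_cast [Nat.cast_sub (show 1 ≤ q by omega)]
            ring
  rw [hL, hR] at hstar
  have hμabs : (‖μ‖ : ℂ) ≠ 0 := by
    exact_mod_cast norm_ne_zero_iff.mpr hμ
  have hexp := mul_left_cancel₀ hμabs hstar
  rw [Complex.exp_eq_exp_iff_exists_int] at hexp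
  obtain ⟨n, hn⟩ := hexp
  refine ⟨n, ?_⟩
  have hn' : (Complex.arg μ + ((p : ℝ) - 1) * Complex.arg u₀ : ℂ)
      = ((-Complex.arg μ + ((q : ℝ) - 1) * Complex.arg v₀ + n * (2 * Real.pi) : ℝ) : ℂ) := by
    have hI : (Complex.I : ℂ) ≠ 0 := Complex.I_ne_zero
    apply mul_right_cancel₀ hI
    rw [hn]
    push_cast
    ring
  have hreal : Complex.arg μ + ((p : ℝ) - 1) * Complex.arg u₀
      = -Complex.arg μ + ((q : ℝ) - 1) * Complex.arg v₀ + n * (2 * Real.pi) := by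
    exact_mod_cast hn'
  linarith [hreal]
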